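/- Let m, n be non-negative integers, λ ⊂ ⟨m^n⟩ a partition, and K an increasing subsequence of (1, …, n). Set κ = sub_n(λ, K), let λ̃ be the (m,n)-complement of λ, and let c = n − l(K) be the number of elements of C_n(K). Then λ' ⋆_{m,c} sub_n(λ̃, C_n(K)) = κ', and the sign of this overlap is ε_{m,c}(λ', sub_n(λ̃, C_n(K))) = (−1)^{Σ_{i ∈ C_n(K)} λ̃_i}. -/

import Mathlib

open scoped Classical

/-- `f : ℕ → ℕ` represents a partition via its parts `f 1 ≥ f 2 ≥ ⋯`
(indices start at `1`; we normalize the unused value at `0` by `f 0 = f 1`). -/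
def IsPartition (f : ℕ → ℕ) : Prop :=
  f 0 = f 1 ∧ (∀ i j, i ≤ j → f j ≤ f i) ∧ ∃ N, ∀ i, N ≤ i → f i = 0

/-- the partition `f` has length (number of positive parts) at most `r`,
i.e. `l(f) ≤ r`. -/
def LenLE (f : ℕ → ℕ) (r : ℕ) : Prop := ∀ i, r < i → f i = 0

/-- two partitions have the same parts. -/
def EqParts (f g : ℕ → ℕ) : Prop := ∀ i, 1 ≤ i → f i = g i

/-- normalize the value at the (unused) index `0`. -/
def pad (f : ℕ → ℕ) : ℕ → ℕ := fun i => if i = 0 then f 1 else f i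

/-- the multiset `{f i + N - i : i = 1, …, N}`. -/
def hooks (N : ℕ) (f : ℕ → ℕ) : Multiset ℕ :=
  (Multiset.range N).map (fun i => f (i + 1) + N - (i + 1))

/-- `lam` is the `(m,n)`-overlap of `mu` and `nu`, i.e. `mu ⋆_{m,n} nu = lam`:
`lam` is a partition of length at most `m + n` such that the sequence
`(lam i + (m+n) - i)_{i=1..m+n}` is a rearrangement of the concatenation of
`(mu i + m - i)_{i=1..m}` and `(nu j + n - j)_{j=1..n}`. -/
def IsOverlap (m n : ℕ) (mu nu lam : ℕ → ℕ) : Prop :=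
  LenLE lam (m + n) ∧ hooks (m + n) lam = hooks m mu + hooks n nu

/-- `mu ⋆_{m,n} nu = ∞`: the two hook sequences share a common value. -/
def OverlapInfinite (m n : ℕ) (mu nu : ℕ → ℕ) : Prop :=
  ∃ a, a ∈ hooks m mu ∧ a ∈ hooks n nu

/-- the sign `ε_{m,n}(mu, nu)` of the permutation sorting the concatenation of
`(mu i + m - i)_{i=1..m}` and `(nu j + n - j)_{j=1..n}` into strictly decreasing
order, computed as `(-1)` to the number of inversions. -/
def overlapSign (m n : ℕ) (mu nu : ℕ → ℕ) : ℤ :=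
  (-1) ^ (((Finset.range m ×ˢ Finset.range n).filter (fun p =>
    mu (p.1 + 1) + m - (p.1 + 1) < nu (p.2 + 1) + n - (p.2 + 1))).card)

/-- the truncation `(f_1, …, f_r)` of a partition. -/
def truncateP (f : ℕ → ℕ) (r : ℕ) : ℕ → ℕ := pad fun i => if i ≤ r then f i else 0

/-- `μ + ⟨k^l⟩ = (μ_1 + k, …, μ_l + k)`. -/
def addRect (mu : ℕ → ℕ) (k l : ℕ) : ℕ → ℕ := pad fun i => if i ≤ l then mu i + k else 0

/-- `μ − ⟨k^l⟩ = (μ_1 − k, …, μ_l − k)`. -/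
def subRect (mu : ℕ → ℕ) (k l : ℕ) : ℕ → ℕ := pad fun i => if i ≤ l then mu i - k else 0

/-- `ν ∪ a`: `ν` regarded as a sequence of length `r`, with the sequence `a`
appended after position `r`. -/
def concatSeq (nu : ℕ → ℕ) (r : ℕ) (tail : ℕ → ℕ) : ℕ → ℕ :=
  pad fun i => if i ≤ r then nu i else tail (i - r)

/-- the rectangular partition `⟨a^b⟩` (with `b` parts equal to `a`). -/
def rectP (a b : ℕ) : ℕ → ℕ := pad fun i => if i ≤ b then a else 0

/-- the `(m,n)`-complement `λ̃ = (m − λ_n, …, m − λ_1)` of a partition `λ ⊂ ⟨m^n⟩`. -/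
def complSeq (m n : ℕ) (lam : ℕ → ℕ) : ℕ → ℕ :=
  pad fun i => if i ≤ n then m - lam (n + 1 - i) else 0

noncomputable section

/-- the `i`-th part `λ'_i = #{j ≥ 1 : λ_j ≥ i}` of the conjugate partition. -/
def conjPart (f : ℕ → ℕ) (i : ℕ) : ℕ := {j : ℕ | 1 ≤ j ∧ i ≤ f j}.ncard

/-- the conjugate partition `λ'`. -/
def conjP (f : ℕ → ℕ) : ℕ → ℕ := pad fun i => conjPart f i

/-- the set of integers `k ≤ min{m,n}` with `λ_{n+1−k} ≤ m − k`. -/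
def indexSet (m n : ℕ) (lam : ℕ → ℕ) : Set ℤ :=
  {k : ℤ | k ≤ min (m : ℤ) (n : ℤ) ∧ (lam ((n : ℤ) + 1 - k).toNat : ℤ) ≤ (m : ℤ) - k}

/-- `k` is the `(m,n)`-index of `lam`: the largest integer `k ≤ min{m,n}`
with `λ_{n+1−k} ≤ m − k`. -/
def IsIndex (m n : ℕ) (lam : ℕ → ℕ) (k : ℤ) : Prop := IsGreatest (indexSet m n lam) k

/-- the `(m,n)`-index of `lam`. -/
def indexOf (m n : ℕ) (lam : ℕ → ℕ) : ℤ := sSup (indexSet m n lam)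

variable {F : Type*} [Field F]

/-- `Δ(X) = ∏_{i<j} (X_i − X_j)`. -/
def vanDet {n : ℕ} (X : Fin n → F) : F :=
  ∏ i : Fin n, ∏ j : Fin n, if i < j then X i - X j else 1

/-- `Δ(X; Y) = ∏_{x ∈ X, y ∈ Y} (x − y)`. -/
def vanPair {n m : ℕ} (X : Fin n → F) (Y : Fin m → F) : F :=
  ∏ i, ∏ j, (X i - Y j)

/-- the Schur function `s_λ(X)`. -/
def schur {n : ℕ} (lam : ℕ → ℕ) (X : Fin n → F) : F :=
  if LenLE lam n then
    (Matrix.of fun i j : Fin n =>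
      X i ^ (lam ((j : ℕ) + 1) + n - ((j : ℕ) + 1))).det / vanDet X
  else 0

/-- the subsequence of `X` indexed by `I` (in increasing order of indices). -/
def subSeq {n : ℕ} (X : Fin n → F) (I : Finset (Fin n)) : Fin I.card → F :=
  fun j => X (I.orderIsoOfFin rfl j).1

/-- the sign `ε(λ) = (−1)^{λ_1+⋯+λ_{n−k}} (−1)^{mk} (−1)^{k(k−1)/2}` from the
determinantal formula. -/
def LSsign (m n k : ℕ) (lam : ℕ → ℕ) : ℤ :=
  (-1) ^ (∑ i ∈ Finset.range (n - k), lam (i + 1)) * (-1) ^ (m * k) *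
    (-1) ^ (k * (k - 1) / 2)

/-- the Moens–Van der Jeugt block matrix. -/
def LSmat (k : ℕ) {n m : ℕ} (lam : ℕ → ℕ) (X : Fin n → F) (Y : Fin m → F) :
    Matrix (Fin (n + (m - k))) (Fin (n + (m - k))) F :=
  Matrix.of fun r c =>
    if hr : (r : ℕ) < n then
      if hc : (c : ℕ) < m then (X ⟨(r : ℕ), hr⟩ - Y ⟨(c : ℕ), hc⟩)⁻¹
      else X ⟨(r : ℕ), hr⟩ ^
        ((lam ((c : ℕ) - m + 1) : ℤ) + (n : ℤ) - (m : ℤ) - (((c : ℕ) - m + 1 : ℕ) : ℤ))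
    else
      if hc : (c : ℕ) < m then
        Y ⟨(c : ℕ), hc⟩ ^
          ((conjPart lam ((r : ℕ) - n + 1) : ℤ) + (m : ℤ) - (n : ℤ) - (((r : ℕ) - n + 1 : ℕ) : ℤ))
      else 0

/-- the Littlewood–Schur function `LS_λ(−X; Y)`, defined by the determinantal
formula of Moens and Van der Jeugt: it is `0` if the `(m,n)`-index `k` of `λ` is
negative, and otherwise equals `ε(λ) · Δ(Y;X)/(Δ(X)Δ(Y)) · det M`. -/
def LS {n m : ℕ} (lam : ℕ → ℕ) (X : Fin n → F) (Y : Fin m → F) : F :=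
  if indexOf m n lam < 0 then 0
  else (LSsign m n (indexOf m n lam).toNat lam : F) * vanPair Y X /
    (vanDet X * vanDet Y) * (LSmat (indexOf m n lam).toNat lam X Y).det

/-- `walkMu lam n I` is the partition with `i`-th part `λ_{V_i} + n + i − V_i`,
where `V_1 < ⋯ < V_card(I)` is the increasing (1-based) enumeration of `I`. -/
def walkMu (lam : ℕ → ℕ) (n : ℕ) {N : ℕ} (I : Finset (Fin N)) : ℕ → ℕ :=
  pad fun i =>
    if h : 1 ≤ i ∧ i ≤ I.card then
      lam (((I.orderIsoOfFin rfl ⟨i - 1, by omega⟩).1 : ℕ) + 1) +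
        (n + i - (((I.orderIsoOfFin rfl ⟨i - 1, by omega⟩).1 : ℕ) + 1))
    else 0

/-- `C_N(K)`: the set `{N − j + 1 : j ∈ {1,…,N} ∖ K}`. -/
def Cfin (N : ℕ) (K : Finset ℕ) : Finset ℕ :=
  (Finset.Icc 1 N \ K).image (fun j => N + 1 - j)

/-- the subpartition `sub_N(λ, s)`: its `j`-th part is
`λ_{s_j} + (N − s_j) − (r − j)`, where `s_1 < ⋯ < s_r` are the elements of `s`. -/
def subPartF (N : ℕ) (lam : ℕ → ℕ) (s : Finset ℕ) : ℕ → ℕ :=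
  pad fun j =>
    if h : 1 ≤ j ∧ j ≤ s.card then
      lam ((s.orderIsoOfFin rfl ⟨j - 1, by omega⟩).1) +
        (N - (s.orderIsoOfFin rfl ⟨j - 1, by omega⟩).1) - (s.card - j)
    else 0

end

/-- `α` is a quasi-partition associated to the subset with membership
predicate `inV` (the complement being taken inside `{1, …, m+n}`). -/
def IsQuasiPartition (m n : ℕ) (inV : ℕ → Prop) (α : ℕ → ℤ) : Prop :=
  0 ≤ α (m + n) ∧
  (∀ i, 1 < i → i < m + n → ¬(α (i - 1) < α i ∧ α i < α (i + 1))) ∧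
  (∀ i, 1 ≤ i → i < m + n → ((inV i ↔ inV (i + 1)) → α (i + 1) ≤ α i)) ∧
  (∀ i, 1 ≤ i → i < m + n → (¬(inV i ↔ inV (i + 1)) → α (i + 1) ≤ α i + 1))

/-- the integer sequence `α_1, …, α_N` is a partition: non-increasing and
non-negative. -/
def IsPartitionSeqZ (N : ℕ) (α : ℕ → ℤ) : Prop :=
  (∀ i j, 1 ≤ i → i ≤ j → j ≤ N → α j ≤ α i) ∧ ∀ i, 1 ≤ i → i ≤ N → 0 ≤ α i

section Helpers

open Multiset Finset

lemma conjP_apply (f : ℕ → ℕ) {i : ℕ} (hi : 1 ≤ i) : conjP f i = conjPart f i := by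
  rw [conjP]; unfold pad; rw [if_neg (by omega : ¬ i = 0)]

lemma conjPart_eq_card (f : ℕ → ℕ) {n : ℕ} (hlen : LenLE f n) {i : ℕ} (hi : 1 ≤ i) :
    conjPart f i = ((Finset.Icc 1 n).filter (fun j => i ≤ f j)).card := by
  rw [conjPart, ← Set.ncard_coe_finset]
  congr 1
  ext j
  simp only [Set.mem_setOf_eq, Finset.coe_filter, Finset.mem_Icc]
  constructor
  · rintro ⟨h1, h2⟩
    refine ⟨⟨h1, ?_⟩, h2⟩
    by_contra h
    have := hlen j (by omega)
    omega
  · rintro ⟨⟨h1, _⟩, h2⟩; exact ⟨h1, h2⟩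

lemma conj_iff (f : ℕ → ℕ) {n : ℕ} (hmono : ∀ i j, 1 ≤ i → i ≤ j → f j ≤ f i)
    (hlen : LenLE f n) {i j : ℕ} (hi : 1 ≤ i) (hj : 1 ≤ j) :
    i ≤ f j ↔ j ≤ conjPart f i := by
  rw [conjPart_eq_card f hlen hi]
  constructor
  · intro h
    have hjn : j ≤ n := by
      by_contra hc
      have := hlen j (by omega); omega
    have hsub : Finset.Icc 1 j ⊆ (Finset.Icc 1 n).filter (fun j' => i ≤ f j') := by
      intro j' hj'
      simp only [Finset.mem_Icc] at hj'
      simp only [Finset.mem_filter, Finset.mem_Icc]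
      exact ⟨⟨hj'.1, by omega⟩, le_trans h (hmono j' j hj'.1 hj'.2)⟩
    have := Finset.card_le_card hsub
    simpa using this
  · intro h
    by_contra hc
    push_neg at hc
    have hsub : (Finset.Icc 1 n).filter (fun j' => i ≤ f j') ⊆ Finset.Icc 1 (j - 1) := by
      intro j' hj'
      simp only [Finset.mem_filter, Finset.mem_Icc] at hj'
      simp only [Finset.mem_Icc]
      refine ⟨hj'.1.1, ?_⟩
      by_contra hcc
      have := hmono j j' hj (by omega)
      omega
    have := Finset.card_le_card hsub
    simp [Nat.card_Icc] at this
    omega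

lemma conjPart_le (f : ℕ → ℕ) {n : ℕ} (hlen : LenLE f n) {i : ℕ} (hi : 1 ≤ i) :
    conjPart f i ≤ n := by
  rw [conjPart_eq_card f hlen hi]
  calc ((Finset.Icc 1 n).filter _).card ≤ (Finset.Icc 1 n).card := Finset.card_le_card (Finset.filter_subset _ _)
  _ = n := by simp

lemma conjPart_anti (f : ℕ → ℕ) {n : ℕ} (hlen : LenLE f n) {i i' : ℕ} (hi : 1 ≤ i)
    (h : i ≤ i') : conjPart f i' ≤ conjPart f i := by
  rw [conjPart_eq_card f hlen hi, conjPart_eq_card f hlen (by omega)]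
  apply Finset.card_le_card
  intro j hj
  simp only [Finset.mem_filter] at hj ⊢
  exact ⟨hj.1, by omega⟩

lemma Icc_one_val (N : ℕ) : (Finset.Icc 1 N).val = (Multiset.range N).map (· + 1) := by
  have h : Finset.Icc 1 N = (Finset.range N).map ⟨(· + 1), fun a b h => by simpa using h⟩ := by
    ext x
    simp only [Finset.mem_Icc, Finset.mem_map, Finset.mem_range, Function.Embedding.coeFn_mk]
    constructor
    · intro hx; exact ⟨x - 1, by omega, by show x - 1 + 1 = x; omega⟩
    · rintro ⟨a, ha, rfl⟩; show 1 ≤ a + 1 ∧ a + 1 ≤ N; omega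
  rw [h, Finset.map_val, Finset.range_val]
  rfl

lemma hooks_eq_Icc (N : ℕ) (g : ℕ → ℕ) :
    hooks N g = (Finset.Icc 1 N).val.map (fun j => g j + N - j) := by
  rw [Icc_one_val, Multiset.map_map]
  rfl

/-- Duality: the hooks of the conjugate and the reflected hooks partition `range (m+n)`. -/
lemma duality (m n : ℕ) (f : ℕ → ℕ) (hmono : ∀ i j, 1 ≤ i → i ≤ j → f j ≤ f i)
    (hlen : LenLE f n) (h1 : f 1 ≤ m) :
    hooks m (conjP f) + (hooks n f).map (fun a => m + n - 1 - a) = Multiset.range (m + n) := by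
  have hfle : ∀ j, 1 ≤ j → f j ≤ m := fun j hj => le_trans (hmono 1 j le_rfl hj) h1
  rw [hooks_eq_Icc, hooks_eq_Icc, Multiset.map_map]
  set A : ℕ → ℕ := fun i => conjP f i + m - i with hA
  set B : ℕ → ℕ := fun j => m + n - 1 - (f j + n - j) with hB
  -- facts
  have hAval : ∀ i, 1 ≤ i → i ≤ m → A i = conjPart f i + (m - i) := by
    intro i hi him
    rw [hA]; simp only; rw [conjP_apply f hi]; omega
  have hBval : ∀ j, 1 ≤ j → j ≤ n → B j = (m - f j) + (j - 1) := by
    intro j hj hjn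
    have := hfle j hj
    rw [hB]; simp only; omega
  have hAanti : ∀ i i', 1 ≤ i → i < i' → i' ≤ m → A i' < A i := by
    intro i i' hi hii hi'
    rw [hAval i hi (by omega), hAval i' (by omega) hi']
    have := conjPart_anti f hlen hi (le_of_lt hii)
    omega
  have hBmono : ∀ j j', 1 ≤ j → j < j' → j' ≤ n → B j < B j' := by
    intro j j' hj hjj hj'
    rw [hBval j hj (by omega), hBval j' (by omega) hj']
    have := hmono j j' hj (le_of_lt hjj)
    have := hfle j hj
    omega
  have hnodupIccm := (Finset.Icc 1 m).nodup
  have hnodupIccn := (Finset.Icc 1 n).nodup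
  have hnodA : ((Finset.Icc 1 m).val.map A).Nodup := by
    apply Multiset.Nodup.map_on _ hnodupIccm
    intro x hx y hy hxy
    simp only [Finset.mem_val, Finset.mem_Icc] at hx hy
    rcases lt_trichotomy x y with h | h | h
    · exact absurd hxy (Nat.ne_of_gt (hAanti x y hx.1 h hy.2))
    · exact h
    · exact absurd hxy (Nat.ne_of_lt (hAanti y x hy.1 h hx.2))
  have hnodB : ((Finset.Icc 1 n).val.map B).Nodup := by
    apply Multiset.Nodup.map_on _ hnodupIccn
    intro x hx y hy hxy
    simp only [Finset.mem_val, Finset.mem_Icc] at hx hy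
    rcases lt_trichotomy x y with h | h | h
    · exact absurd hxy (Nat.ne_of_lt (hBmono x y hx.1 h hy.2))
    · exact h
    · exact absurd hxy (Nat.ne_of_gt (hBmono y x hy.1 h hx.2))
  have hdisj : Disjoint ((Finset.Icc 1 m).val.map A) ((Finset.Icc 1 n).val.map B) := by
    rw [Multiset.disjoint_left]
    rintro a ha hb
    rw [Multiset.mem_map] at ha hb
    obtain ⟨i, hi, hia⟩ := ha
    obtain ⟨j, hj, hjb⟩ := hb
    simp only [Finset.mem_val, Finset.mem_Icc] at hi hj
    rw [hAval i hi.1 hi.2] at hia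
    rw [hBval j hj.1 hj.2] at hjb
    -- conjPart f i + (m - i) = (m - f j) + (j - 1)
    have hcf := conj_iff f hmono hlen hi.1 hj.1
    have hfj := hfle j hj.1
    rcases le_or_gt i (f j) with hle | hlt
    · have : j ≤ conjPart f i := hcf.mp hle
      omega
    · have : ¬ j ≤ conjPart f i := fun hc => absurd (hcf.mpr hc) (by omega)
      omega
  have hnodup : ((Finset.Icc 1 m).val.map A + (Finset.Icc 1 n).val.map B).Nodup :=
    Multiset.nodup_add.mpr ⟨hnodA, hnodB, hdisj⟩
  have hsub : ((Finset.Icc 1 m).val.map A + (Finset.Icc 1 n).val.map B) ⊆ Multiset.range (m + n) := by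
    intro a ha
    rw [Multiset.mem_add] at ha
    rw [Multiset.mem_range]
    rcases ha with ha | ha <;> rw [Multiset.mem_map] at ha
    · obtain ⟨i, hi, rfl⟩ := ha
      simp only [Finset.mem_val, Finset.mem_Icc] at hi
      rw [hAval i hi.1 hi.2]
      have := conjPart_le f hlen hi.1
      omega
    · obtain ⟨j, hj, rfl⟩ := ha
      simp only [Finset.mem_val, Finset.mem_Icc] at hj
      rw [hBval j hj.1 hj.2]
      have := hfle j hj.1
      omega
  have hle := (Multiset.le_iff_subset hnodup).mpr hsub
  have hcard : Multiset.card (Multiset.range (m + n)) ≤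
      Multiset.card ((Finset.Icc 1 m).val.map A + (Finset.Icc 1 n).val.map B) := by
    simp [Multiset.card_range, ← Finset.card_def]
  exact Multiset.eq_of_le_of_card_le hle hcard

end Helpers

section Helpers2

lemma strictMono_gap {k : ℕ} (e : Fin k → ℕ) (he : StrictMono e) :
    ∀ (d : ℕ) (a b : Fin k), (b : ℕ) = (a : ℕ) + d → e a + d ≤ e b := by
  intro d
  induction d with
  | zero => intro a b hab; have h : a = b := Fin.ext (by omega); rw [h]; omega
  | succ d ih =>
    intro a b hab
    have hb' : (a : ℕ) + d < k := by omega
    have h1 := ih a ⟨(a : ℕ) + d, hb'⟩ rfl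
    have h2 : e ⟨(a : ℕ) + d, hb'⟩ < e b := he (by simp [Fin.lt_def]; omega)
    omega

lemma univ_val_map_val (k : ℕ) :
    ((Finset.univ : Finset (Fin k)).val).map Fin.val = Multiset.range k := by
  have hnod : (((Finset.univ : Finset (Fin k)).val).map Fin.val).Nodup :=
    Multiset.Nodup.map Fin.val_injective (Finset.univ.nodup)
  have hsub : (((Finset.univ : Finset (Fin k)).val).map Fin.val) ⊆ Multiset.range k := by
    intro a ha
    rw [Multiset.mem_map] at ha
    obtain ⟨j, _, rfl⟩ := ha
    rw [Multiset.mem_range]; exact j.2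
  refine Multiset.eq_of_le_of_card_le ((Multiset.le_iff_subset hnod).mpr hsub) ?_
  simp

section SubPart

variable {n : ℕ} (s : Finset ℕ)

lemma finset_val_eq_map :
    s.val = ((Finset.univ : Finset (Fin s.card)).val).map (fun j => (s.orderEmbOfFin rfl j : ℕ)) := by
  have hnod : (((Finset.univ : Finset (Fin s.card)).val).map
      (fun j => (s.orderEmbOfFin rfl j : ℕ))).Nodup :=
    Multiset.Nodup.map (s.orderEmbOfFin rfl).injective (Finset.univ.nodup)
  have hsub : (((Finset.univ : Finset (Fin s.card)).val).map
      (fun j => (s.orderEmbOfFin rfl j : ℕ))) ⊆ s.val := by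
    intro a ha
    rw [Multiset.mem_map] at ha
    obtain ⟨j, _, rfl⟩ := ha
    exact s.orderEmbOfFin_mem rfl j
  refine (Multiset.eq_of_le_of_card_le ((Multiset.le_iff_subset hnod).mpr hsub) ?_).symm
  simp

lemma subPartF_zero_of_gt (f : ℕ → ℕ) {j : ℕ} (hj : s.card < j) : subPartF n f s j = 0 := by
  simp only [subPartF, pad]
  rw [if_neg (by omega : ¬ j = 0), dif_neg (by omega)]

variable (hs : s ⊆ Finset.Icc 1 n)
include hs

lemma orderEmb_low (j : Fin s.card) : (j : ℕ) + 1 ≤ s.orderEmbOfFin rfl j := by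
  have h0 : (0 : ℕ) < s.card := j.pos
  have hmem := s.orderEmbOfFin_mem rfl ⟨0, h0⟩
  have h1 : 1 ≤ s.orderEmbOfFin rfl ⟨0, h0⟩ := by
    have h2 := hs hmem; simp only [Finset.mem_Icc] at h2; omega
  have h3 := strictMono_gap _ (s.orderEmbOfFin rfl).strictMono (j : ℕ) ⟨0, h0⟩ j (by simp)
  omega

lemma orderEmb_high (j : Fin s.card) :
    (s.orderEmbOfFin rfl j : ℕ) + (s.card - 1 - (j : ℕ)) ≤ n := by
  have hlast : s.card - 1 < s.card := by have := j.pos; omega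
  have hmem := s.orderEmbOfFin_mem rfl ⟨s.card - 1, hlast⟩
  have h1 : s.orderEmbOfFin rfl ⟨s.card - 1, hlast⟩ ≤ n := by
    have h2 := hs hmem; simp only [Finset.mem_Icc] at h2; omega
  have h3 := strictMono_gap _ (s.orderEmbOfFin rfl).strictMono (s.card - 1 - (j : ℕ)) j
    ⟨s.card - 1, hlast⟩ (by have := j.2; simp; omega)
  omega

lemma orderEmb_le_n (j : Fin s.card) : (s.orderEmbOfFin rfl j : ℕ) ≤ n := by
  have := orderEmb_high s hs j; omega

lemma subPartF_hook_pointwise (f : ℕ → ℕ) (j : Fin s.card) :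
    subPartF n f s ((j : ℕ) + 1) + s.card - ((j : ℕ) + 1)
      = f (s.orderEmbOfFin rfl j) + n - s.orderEmbOfFin rfl j := by
  have hcond : 1 ≤ (j : ℕ) + 1 ∧ (j : ℕ) + 1 ≤ s.card := ⟨by omega, j.2⟩
  simp only [subPartF, pad]
  rw [if_neg (by omega : ¬ (j : ℕ) + 1 = 0), dif_pos hcond]
  simp only [Nat.add_sub_cancel, Fin.eta, Finset.coe_orderIsoOfFin_apply]
  have hlow := orderEmb_low s hs j
  have hhigh := orderEmb_high s hs j
  have hj2 := j.2
  omega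

lemma subPartF_val_pointwise (f : ℕ → ℕ) (j : Fin s.card) :
    subPartF n f s ((j : ℕ) + 1)
      = f (s.orderEmbOfFin rfl j) + (n - s.orderEmbOfFin rfl j) - (s.card - 1 - (j : ℕ)) := by
  have h1 := subPartF_hook_pointwise s hs f j
  have hlow := orderEmb_low s hs j
  have hhigh := orderEmb_high s hs j
  have hj2 := j.2
  omega

lemma hooks_subPartF (f : ℕ → ℕ) :
    hooks s.card (subPartF n f s) = s.val.map (fun i => f i + n - i) := by
  rw [hooks, ← univ_val_map_val s.card, Multiset.map_map,
    finset_val_eq_map s, Multiset.map_map]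
  apply Multiset.map_congr rfl
  intro j _
  exact subPartF_hook_pointwise s hs f j

lemma subPartF_mono (f : ℕ → ℕ) (hmono : ∀ i j, 1 ≤ i → i ≤ j → f j ≤ f i) :
    ∀ i j, 1 ≤ i → i ≤ j → subPartF n f s j ≤ subPartF n f s i := by
  intro i j hi hij
  rcases le_or_gt j s.card with hj | hj
  · rcases eq_or_lt_of_le hij with rfl | hlt
    · exact le_rfl
    · have hji : i - 1 < s.card := by omega
      have hjj : j - 1 < s.card := by omega
      have hvi := subPartF_val_pointwise s hs f ⟨i - 1, hji⟩
      have hvj := subPartF_val_pointwise s hs f ⟨j - 1, hjj⟩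
      have hgap := strictMono_gap _ (s.orderEmbOfFin rfl).strictMono (j - i)
        ⟨i - 1, hji⟩ ⟨j - 1, hjj⟩ (by simp; omega)
      have hf : f (s.orderEmbOfFin rfl ⟨j - 1, hjj⟩) ≤ f (s.orderEmbOfFin rfl ⟨i - 1, hji⟩) := by
        apply hmono
        · have := orderEmb_low s hs ⟨i - 1, hji⟩; simp at this; omega
        · apply le_of_lt
          exact (s.orderEmbOfFin rfl).strictMono (by simp [Fin.lt_def]; omega)
      have hlowi := orderEmb_low s hs ⟨i - 1, hji⟩
      have hhighj := orderEmb_high s hs ⟨j - 1, hjj⟩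
      simp only [Fin.val_mk] at hvi hvj hgap hlowi hhighj
      rw [(by omega : (i - 1 : ℕ) + 1 = i)] at hvi
      rw [(by omega : (j - 1 : ℕ) + 1 = j)] at hvj
      omega
  · rw [subPartF_zero_of_gt s f hj]; omega

lemma subPartF_one_le (f : ℕ → ℕ) {m : ℕ} (hf1 : ∀ i, 1 ≤ i → f i ≤ m) :
    subPartF n f s 1 ≤ m + (n - s.card) := by
  rcases Nat.eq_zero_or_pos s.card with h0 | h0
  · rw [subPartF_zero_of_gt s f (by omega)]; omega
  · have hv := subPartF_val_pointwise s hs f ⟨0, h0⟩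
    have hlow := orderEmb_low s hs ⟨0, h0⟩
    have hhigh := orderEmb_high s hs ⟨0, h0⟩
    have hfv := hf1 _ (by omega : 1 ≤ (s.orderEmbOfFin rfl ⟨0, h0⟩ : ℕ))
    simp only [Fin.val_mk] at hv hlow hhigh
    norm_num at hv
    omega

lemma card_le_of_subset_Icc : s.card ≤ n := by
  have := Finset.card_le_card hs
  simpa using this

end SubPart
end Helpers2

section Helpers3

lemma complSeq_apply (m n : ℕ) (lam : ℕ → ℕ) {i : ℕ} (h1 : 1 ≤ i) (h2 : i ≤ n) :
    complSeq m n lam i = m - lam (n + 1 - i) := by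
  simp only [complSeq, pad]
  rw [if_neg (by omega : ¬ i = 0), if_pos h2]

lemma Cfin_subset (n : ℕ) (K : Finset ℕ) : Cfin n K ⊆ Finset.Icc 1 n := by
  intro x hx
  simp only [Cfin, Finset.mem_image, Finset.mem_sdiff, Finset.mem_Icc] at hx
  obtain ⟨j, ⟨⟨hj1, hj2⟩, _⟩, rfl⟩ := hx
  simp only [Finset.mem_Icc]
  omega

lemma Cfin_val (n : ℕ) (K : Finset ℕ) :
    (Cfin n K).val = (Finset.Icc 1 n \ K).val.map (fun j => n + 1 - j) := by
  rw [Cfin]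
  apply Finset.image_val_of_injOn
  intro x hx y hy hxy
  simp only [Finset.coe_sdiff, Set.mem_diff, Finset.coe_Icc, Set.mem_Icc] at hx hy
  simp only at hxy
  omega

lemma Cfin_card (n : ℕ) (K : Finset ℕ) (hK : K ⊆ Finset.Icc 1 n) :
    (Cfin n K).card = n - K.card := by
  have h1 : (Cfin n K).card = (Finset.Icc 1 n \ K).card := by
    rw [Finset.card_def, Cfin_val, Multiset.card_map, ← Finset.card_def]
  rw [h1, Finset.card_sdiff_of_subset hK, Nat.card_Icc]
  omega

lemma countP_lt_range (N t : ℕ) (h : t ≤ N) :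
    Multiset.countP (fun x => x < t) (Multiset.range N) = t := by
  rw [Multiset.countP_eq_card_filter]
  have hv : Multiset.filter (fun x => x < t) (Multiset.range N)
      = (Finset.filter (fun x => x < t) (Finset.range N)).val := by
    rw [Finset.filter_val, Finset.range_val]
  rw [hv, ← Finset.card_def]
  have h2 : Finset.filter (fun x => x < t) (Finset.range N) = Finset.range t := by
    ext x
    simp only [Finset.mem_filter, Finset.mem_range]
    omega
  have h3 := congrArg Finset.card h2
  rw [h2, Finset.card_range]

end Helpers3

/-- **Overlap with a subpartition** (Lemma 4.14): for `λ ⊂ ⟨m^n⟩`, a subsequence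
`K` of `(1,…,n)` and `κ = sub_n(λ, K)`, one has
`λ' ⋆_{m, n−l(K)} sub_n(λ̃, C_n(K)) = κ'`, with sign
`(−1)^{Σ_{i ∈ C_n(K)} λ̃_i}`. -/
theorem overlap_with_subpartition
    {m n : ℕ} (lam : ℕ → ℕ) (hlam : IsPartition lam) (hlen : LenLE lam n)
    (hlam1 : lam 1 ≤ m)
    (K : Finset ℕ) (hK : K ⊆ Finset.Icc 1 n) :
    IsOverlap m (n - K.card) (conjP lam)
        (subPartF n (complSeq m n lam) (Cfin n K)) (conjP (subPartF n lam K)) ∧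
    overlapSign m (n - K.card) (conjP lam) (subPartF n (complSeq m n lam) (Cfin n K)) =
      (-1) ^ (∑ i ∈ Cfin n K, complSeq m n lam i) := by
  obtain ⟨-, hmono0, -⟩ := hlam
  have hmono : ∀ i j, 1 ≤ i → i ≤ j → lam j ≤ lam i := fun i j _ h => hmono0 i j h
  have hfle : ∀ j, 1 ≤ j → lam j ≤ m := fun j hj => le_trans (hmono 1 j le_rfl hj) hlam1
  have hCsub : Cfin n K ⊆ Finset.Icc 1 n := Cfin_subset n K
  have hrn : K.card ≤ n := card_le_of_subset_Icc K hK
  have hCcard : (Cfin n K).card = n - K.card := Cfin_card n K hK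
  have hκmono := subPartF_mono K hK lam hmono
  have hκlen : LenLE (subPartF n lam K) K.card := fun j hj => subPartF_zero_of_gt K lam hj
  have hκ1 : subPartF n lam K 1 ≤ m + (n - K.card) := subPartF_one_le K hK lam hfle
  have eq1 := duality m n lam hmono hlen hlam1
  rw [hooks_eq_Icc n lam, Multiset.map_map] at eq1
  have eq2 := duality (m + (n - K.card)) K.card (subPartF n lam K) hκmono hκlen hκ1
  have hmn : m + (n - K.card) + K.card = m + n := by omega
  rw [hmn] at eq2
  have hKhooks : hooks K.card (subPartF n lam K) = K.val.map (fun j => lam j + n - j) :=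
    hooks_subPartF K hK lam
  rw [hKhooks, Multiset.map_map] at eq2
  have hsplit : (Finset.Icc 1 n).val = (Finset.Icc 1 n \ K).val + K.val := by
    have hle : K.val ≤ (Finset.Icc 1 n).val := Finset.val_le_iff.mpr hK
    rw [Finset.sdiff_val, tsub_add_cancel_of_le hle]
  have hνhooks : hooks (n - K.card) (subPartF n (complSeq m n lam) (Cfin n K))
      = (Finset.Icc 1 n \ K).val.map
          ((fun a => m + n - 1 - a) ∘ fun j => lam j + n - j) := by
    rw [← hCcard, hooks_subPartF (Cfin n K) hCsub, Cfin_val, Multiset.map_map]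
    apply Multiset.map_congr rfl
    intro j hj
    rw [← Finset.mem_def] at hj
    simp only [Finset.mem_sdiff, Finset.mem_Icc] at hj
    simp only [Function.comp_apply]
    rw [complSeq_apply m n lam (by omega) (by omega)]
    rw [(by omega : n + 1 - (n + 1 - j) = j)]
    have := hfle j hj.1.1
    omega
  have hover : hooks (m + (n - K.card)) (conjP (subPartF n lam K))
      = hooks m (conjP lam) + hooks (n - K.card) (subPartF n (complSeq m n lam) (Cfin n K)) := by
    refine add_right_cancel
      (b := K.val.map ((fun a => m + n - 1 - a) ∘ fun j => lam j + n - j)) ?_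
    rw [eq2, hνhooks, add_assoc, ← Multiset.map_add, ← hsplit, eq1]
  have hconjκlen : LenLE (conjP (subPartF n lam K)) (m + (n - K.card)) := by
    intro i hi
    rw [conjP_apply _ (by omega : 1 ≤ i), conjPart_eq_card _ hκlen (by omega)]
    rw [Finset.card_eq_zero, Finset.filter_eq_empty_iff]
    intro j hj
    simp only [Finset.mem_Icc] at hj
    have h1 : subPartF n lam K j ≤ subPartF n lam K 1 := hκmono 1 j le_rfl hj.1
    omega
  refine ⟨⟨hconjκlen, hover⟩, ?_⟩
  -- sign computation
  unfold overlapSign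
  congr 1
  have key : ∀ jf : Fin (Cfin n K).card,
      (∑ x ∈ Finset.range m, if conjP lam (x + 1) + m - (x + 1)
          < subPartF n (complSeq m n lam) (Cfin n K) ((jf : ℕ) + 1)
              + (n - K.card) - ((jf : ℕ) + 1) then 1 else 0)
        = complSeq m n lam ((Cfin n K).orderEmbOfFin rfl jf) := by
    intro jf
    have hi0mem := (Cfin n K).orderEmbOfFin_mem rfl jf
    have hi0Icc := hCsub hi0mem
    rw [Finset.mem_Icc] at hi0Icc
    obtain ⟨hi1, hi2⟩ := hi0Icc
    have hcompl : complSeq m n lam ((Cfin n K).orderEmbOfFin rfl jf)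
        = m - lam (n + 1 - (Cfin n K).orderEmbOfFin rfl jf) :=
      complSeq_apply m n lam hi1 hi2
    have hlamj0 := hfle (n + 1 - (Cfin n K).orderEmbOfFin rfl jf) (by omega)
    have hhook := subPartF_hook_pointwise (Cfin n K) hCsub (complSeq m n lam) jf
    have ht : subPartF n (complSeq m n lam) (Cfin n K) ((jf : ℕ) + 1)
          + (n - K.card) - ((jf : ℕ) + 1)
        = (m - lam (n + 1 - (Cfin n K).orderEmbOfFin rfl jf))
            + ((n + 1 - (Cfin n K).orderEmbOfFin rfl jf) - 1) := by
      omega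
    rw [ht]
    have hsum : Multiset.countP
        (fun a => a < (m - lam (n + 1 - (Cfin n K).orderEmbOfFin rfl jf))
            + ((n + 1 - (Cfin n K).orderEmbOfFin rfl jf) - 1)) (hooks m (conjP lam))
        = ∑ x ∈ Finset.range m,
            if conjP lam (x + 1) + m - (x + 1)
              < (m - lam (n + 1 - (Cfin n K).orderEmbOfFin rfl jf))
                + ((n + 1 - (Cfin n K).orderEmbOfFin rfl jf) - 1) then 1 else 0 := by
      unfold hooks
      rw [Multiset.countP_map, ← Finset.card_filter]
      rfl
    rw [← hsum]
    have hcount := congrArg (Multiset.countP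
      (fun a => a < (m - lam (n + 1 - (Cfin n K).orderEmbOfFin rfl jf))
          + ((n + 1 - (Cfin n K).orderEmbOfFin rfl jf) - 1))) eq1
    rw [Multiset.countP_add] at hcount
    rw [countP_lt_range (m + n) _ (by omega)] at hcount
    have hmid : Multiset.countP
        (fun a => a < (m - lam (n + 1 - (Cfin n K).orderEmbOfFin rfl jf))
            + ((n + 1 - (Cfin n K).orderEmbOfFin rfl jf) - 1))
        ((Finset.Icc 1 n).val.map ((fun a => m + n - 1 - a) ∘ fun j => lam j + n - j))
        = (n + 1 - (Cfin n K).orderEmbOfFin rfl jf) - 1 := by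
      rw [Multiset.countP_map]
      have hfeq : Multiset.filter
          (fun a => ((fun a => m + n - 1 - a) ∘ fun j => lam j + n - j) a
            < (m - lam (n + 1 - (Cfin n K).orderEmbOfFin rfl jf))
              + ((n + 1 - (Cfin n K).orderEmbOfFin rfl jf) - 1)) (Finset.Icc 1 n).val
          = (Finset.filter (fun j => m + n - 1 - (lam j + n - j)
              < (m - lam (n + 1 - (Cfin n K).orderEmbOfFin rfl jf))
                + ((n + 1 - (Cfin n K).orderEmbOfFin rfl jf) - 1)) (Finset.Icc 1 n)).val := by
        rw [Finset.filter_val]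
        rfl
      rw [hfeq, ← Finset.card_def]
      have hfe2 : Finset.filter (fun j => m + n - 1 - (lam j + n - j)
          < (m - lam (n + 1 - (Cfin n K).orderEmbOfFin rfl jf))
            + ((n + 1 - (Cfin n K).orderEmbOfFin rfl jf) - 1)) (Finset.Icc 1 n)
          = Finset.Icc 1 ((n + 1 - (Cfin n K).orderEmbOfFin rfl jf) - 1) := by
        ext x
        simp only [Finset.mem_filter, Finset.mem_Icc]
        constructor
        · rintro ⟨⟨hx1, hxn⟩, hlt⟩
          refine ⟨hx1, ?_⟩
          by_contra hc
          have hm1 := hmono (n + 1 - (Cfin n K).orderEmbOfFin rfl jf) x (by omega) (by omega)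
          have hm2 := hfle x hx1
          omega
        · rintro ⟨hx1, hxle⟩
          have hxn : x ≤ n := by omega
          refine ⟨⟨hx1, hxn⟩, ?_⟩
          have hm1 := hmono x (n + 1 - (Cfin n K).orderEmbOfFin rfl jf) hx1 (by omega)
          have hm2 := hfle x hx1
          omega
      rw [hfe2, Nat.card_Icc]
      omega
    rw [hmid] at hcount
    rw [hcompl]
    omega
  rw [Finset.card_filter, Finset.sum_product_right]
  refine Finset.sum_bij
    (fun q hq => ((Cfin n K).orderEmbOfFin rfl ⟨q, by
      have := Finset.mem_range.mp hq; omega⟩ : ℕ)) ?_ ?_ ?_ ?_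
  · intro q hq
    exact (Cfin n K).orderEmbOfFin_mem rfl _
  · intro a1 ha1 a2 ha2 heq
    have := ((Cfin n K).orderEmbOfFin rfl).injective heq
    simpa using this
  · intro b hb
    have hbr : b ∈ Set.range ⇑((Cfin n K).orderEmbOfFin rfl) := by
      rw [Finset.range_orderEmbOfFin]; exact hb
    obtain ⟨jf, hjf⟩ := hbr
    exact ⟨(jf : ℕ), Finset.mem_range.mpr (by have := jf.2; omega), hjf⟩
  · intro q hq
    exact key ⟨q, by have := Finset.mem_range.mp hq; omega⟩
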